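/- For Q ≥ 3, let γ₁ < γ₂ < ⋯ < γ_S be the elements of 𝔖𝔉_Q with denominators q₁,…,q_S, and set q₀ := 1 (denominator of 0/1) and q_{S+1} := q₁ (cyclic convention). Then the sum of indices satisfies ∑_{i=1}^{S} (q_{i−1} + q_{i+1})/q_i = 3S − 1. -/

import Mathlib

/-- The multiplicative inverse of `a` mod `q` lying in `[1,q)` when `q ≥ 2` and
`gcd(a,q)=1`; by convention it is `0` when `q ≤ 1`. -/
noncomputable def modInv (a q : ℕ) : ℕ := if q ≤ 1 then 0 else ((a : ZMod q)⁻¹).val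

/-- The height `h(a/q) = q + a + ā` of a rational `x = a/q` in lowest terms. -/
noncomputable def height (x : ℚ) : ℕ := x.den + x.num.toNat + modInv x.num.toNat x.den

/-- The set of `SL(2,ℕ)`-saturated Farey fractions of order `Q`. -/
noncomputable def SF (Q : ℕ) : Set ℚ := {x : ℚ | 0 < x ∧ x ≤ 1 ∧ height x ≤ Q}

namespace SFP

/-- Unimodularity of a consecutive pair. -/
def Uni (x y : ℚ) : Prop := y.num * x.den - x.num * y.den = 1

/-- The mediant. -/
noncomputable def med (x y : ℚ) : ℚ := ((x.num + y.num : ℤ) : ℚ) / ((((x.den : ℤ) + (y.den : ℤ) : ℤ)) : ℚ)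

lemma uni_coprime {x y : ℚ} (h : Uni x y) :
    Nat.Coprime (x.num + y.num).natAbs ((x.den : ℤ) + (y.den : ℤ)).natAbs := by
  have hic : IsCoprime (x.num + y.num) ((x.den : ℤ) + (y.den : ℤ)) :=
    ⟨x.den, -x.num, by unfold Uni at h; ring_nf; ring_nf at h; linarith⟩
  exact Int.isCoprime_iff_gcd_eq_one.mp hic

lemma den_sum_pos (x y : ℚ) : (0 : ℤ) < (x.den : ℤ) + (y.den : ℤ) := by
  have := x.pos; have := y.pos; omega

lemma med_num {x y : ℚ} (h : Uni x y) : (med x y).num = x.num + y.num := by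
  unfold med; exact Rat.num_div_eq_of_coprime (den_sum_pos x y) (uni_coprime h)

lemma med_den {x y : ℚ} (h : Uni x y) : ((med x y).den : ℤ) = (x.den : ℤ) + (y.den : ℤ) := by
  unfold med; exact Rat.den_div_eq_of_coprime (den_sum_pos x y) (uni_coprime h)

lemma med_den' {x y : ℚ} (h : Uni x y) : (med x y).den = x.den + y.den := by
  have := med_den h; exact_mod_cast this

lemma lt_med {x y : ℚ} (h : Uni x y) : x < med x y := by
  rw [Rat.lt_iff, med_num h, med_den h]
  unfold Uni at h; nlinarith [h]

lemma med_lt {x y : ℚ} (h : Uni x y) : med x y < y := by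
  rw [Rat.lt_iff, med_num h, med_den h]
  unfold Uni at h; nlinarith [h]

lemma uni_left {x y : ℚ} (h : Uni x y) : Uni x (med x y) := by
  unfold Uni; rw [med_num h, med_den h]; unfold Uni at h; linear_combination h

lemma uni_right {x y : ℚ} (h : Uni x y) : Uni (med x y) y := by
  unfold Uni; rw [med_num h, med_den h]; unfold Uni at h; linear_combination h

lemma modInv_eq {a q b : ℕ} (hq : 2 ≤ q) (hb : b < q)
    (h : (a : ZMod q) * (b : ZMod q) = 1) : modInv a q = b := by
  unfold modInv
  rw [if_neg (by omega)]
  haveI : NeZero q := ⟨by omega⟩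
  rw [ZMod.inv_eq_of_mul_eq_one q _ _ h, ZMod.val_cast_of_lt hb]

lemma natCast_zmod_eq_one {q : ℕ} (n : ℕ) (k : ℤ) (h : (n : ℤ) = 1 + k * q) :
    ((n : ℕ) : ZMod q) = 1 := by
  calc ((n : ℕ) : ZMod q) = (((n : ℕ) : ℤ) : ZMod q) := (Int.cast_natCast _).symm
    _ = ((1 + k * q : ℤ) : ZMod q) := by rw [h]
    _ = 1 := by
        rw [Int.cast_add, Int.cast_one, Int.cast_mul, Int.cast_natCast,
          ZMod.natCast_self, mul_zero, add_zero]

lemma height_med {x y : ℚ} (h : Uni x y) (hx : 0 ≤ x) (hxy : x < y) :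
    height (med x y) = 2 * x.den + y.den + x.num.toNat + y.num.toNat := by
  have hyn : 0 < y.num := Rat.num_pos.mpr (lt_of_le_of_lt hx hxy)
  have hxn : 0 ≤ x.num := Rat.num_nonneg.mpr hx
  have ha : (x.num.toNat : ℤ) = x.num := Int.toNat_of_nonneg hxn
  have hb : (y.num.toNat : ℤ) = y.num := Int.toNat_of_nonneg hyn.le
  have hm_num : (med x y).num = x.num + y.num := med_num h
  have hm_den : (med x y).den = x.den + y.den := med_den' h
  have htn : (med x y).num.toNat = x.num.toNat + y.num.toNat := by rw [hm_num]; omega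
  have hxp := x.pos; have hyp := y.pos
  have hmi : modInv (x.num.toNat + y.num.toNat) (x.den + y.den) = x.den := by
    apply modInv_eq (by omega) (by omega)
    rw [← Nat.cast_mul]
    apply natCast_zmod_eq_one _ x.num
    push_cast [ha, hb]
    unfold Uni at h; linear_combination h
  unfold height
  rw [htn, hm_den, hmi]
  omega

lemma height_right_lt {x y : ℚ} (h : Uni x y) (hx : 0 ≤ x) (hxy : x < y) :
    height y < height (med x y) := by
  have hyn : 0 < y.num := Rat.num_pos.mpr (lt_of_le_of_lt hx hxy)
  have hxn : 0 ≤ x.num := Rat.num_nonneg.mpr hx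
  have ha : (x.num.toNat : ℤ) = x.num := Int.toNat_of_nonneg hxn
  have hb : (y.num.toNat : ℤ) = y.num := Int.toNat_of_nonneg hyn.le
  have hxp := x.pos; have hyp := y.pos
  rw [height_med h hx hxy]
  unfold height
  have hkey : modInv y.num.toNat y.den ≤ x.den := by
    by_cases hd : y.den ≤ 1
    · unfold modInv; rw [if_pos hd]; omega
    · have : modInv y.num.toNat y.den = x.den % y.den := by
        apply modInv_eq (by omega) (Nat.mod_lt _ (by omega))
        rw [ZMod.natCast_mod, ← Nat.cast_mul]
        apply natCast_zmod_eq_one _ x.num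
        push_cast [ha, hb]
        unfold Uni at h; linear_combination h
      rw [this]; exact Nat.mod_le _ _
  omega

lemma height_left_lt {x y : ℚ} (h : Uni x y) (hx : 0 ≤ x) (hxy : x < y) :
    height x < height (med x y) := by
  rw [height_med h hx hxy]
  unfold height
  have hyn : 0 < y.num := Rat.num_pos.mpr (lt_of_le_of_lt hx hxy)
  have hxp := x.pos; have hyp := y.pos
  have hynt : 1 ≤ y.num.toNat := by omega
  have hkey : modInv x.num.toNat x.den ≤ x.den := by
    unfold modInv; split
    · omega
    · rename_i hd
      haveI : NeZero x.den := ⟨by omega⟩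
      exact (ZMod.val_lt _).le
  omega

lemma den_add_le {p x y : ℚ} (h : Uni p x) (h1 : p < y) (h2 : y < x) :
    p.den + x.den ≤ y.den := by
  rw [Rat.lt_iff] at h1 h2
  have hA : (1 : ℤ) ≤ x.num * y.den - y.num * x.den := by linarith
  have hB : (1 : ℤ) ≤ y.num * p.den - p.num * y.den := by linarith
  unfold Uni at h
  have key : (y.den : ℤ) = (p.den : ℤ) * (x.num * y.den - y.num * x.den)
      + (x.den : ℤ) * (y.num * p.den - p.num * y.den) := by
    linear_combination (-(y.den : ℤ)) * h
  have hpd : (1 : ℤ) ≤ (p.den : ℤ) := by exact_mod_cast p.pos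
  have hxd : (1 : ℤ) ≤ (x.den : ℤ) := by exact_mod_cast x.pos
  have : (p.den : ℤ) + (x.den : ℤ) ≤ (y.den : ℤ) := by nlinarith
  exact_mod_cast this


lemma heightD : ∀ n : ℕ, ∀ p x y : ℚ, y.den < n + p.den + x.den → Uni p x → 0 ≤ p → p < y → y < x →
    height (med p x) ≤ height y ∧ (y ≠ med p x → height (med p x) < height y) := by
  intro n
  induction n with
  | zero =>
    intro p x y hn hu hp h1 h2
    exact absurd (den_add_le hu h1 h2) (by omega)
  | succ n ih =>
    intro p x y hn hu hp h1 h2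
    by_cases hym : y = med p x
    · exact ⟨le_of_eq (by rw [hym]), fun h => absurd hym h⟩
    · have hpd := p.pos; have hxd := x.pos
      rcases lt_or_gt_of_ne hym with hlt | hgt
      · -- y ∈ (p, med p x)
        have hu' : Uni p (med p x) := uni_left hu
        have hden : (med p x).den = p.den + x.den := med_den' hu
        have hn' : y.den < n + p.den + (med p x).den := by rw [hden]; omega
        have hrec := ih p (med p x) y hn' hu' hp h1 hlt
        have hstep : height (med p x) < height (med p (med p x)) :=
          height_right_lt hu' hp (lt_med hu)
        exact ⟨le_of_lt (lt_of_lt_of_le hstep hrec.1), fun _ => lt_of_lt_of_le hstep hrec.1⟩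
      · -- y ∈ (med p x, x)
        have hu' : Uni (med p x) x := uni_right hu
        have hden : (med p x).den = p.den + x.den := med_den' hu
        have hm0 : (0:ℚ) ≤ med p x := le_of_lt (lt_of_le_of_lt hp (lt_med hu))
        have hn' : y.den < n + (med p x).den + x.den := by rw [hden]; omega
        have hrec := ih (med p x) x y hn' hu' hm0 hgt h2
        have hstep : height (med p x) < height (med (med p x) x) :=
          height_left_lt hu' hm0 (med_lt hu)
        exact ⟨le_of_lt (lt_of_lt_of_le hstep hrec.1), fun _ => lt_of_lt_of_le hstep hrec.1⟩

/-- sum over consecutive pairs of `den/den' + den'/den`. -/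
noncomputable def pairSum : ℚ → List ℚ → ℚ
  | _, [] => 0
  | p, x :: xs => ((p.den : ℚ) / (x.den : ℚ) + (x.den : ℚ) / (p.den : ℚ)) + pairSum x xs

/-- insert mediants of height at most `Q` into a chain headed by `p`. -/
noncomputable def ins (Q : ℕ) : ℚ → List ℚ → List ℚ
  | _, [] => []
  | p, x :: xs => if height (med p x) ≤ Q then med p x :: x :: ins Q x xs else x :: ins Q x xs

lemma ins_chain_lt (Q : ℕ) : ∀ l p, List.Chain (· < ·) p l → List.Chain Uni p l →
    List.Chain (· < ·) p (ins Q p l) := by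
  intro l
  induction l with
  | nil => intro p _ _; exact List.Chain.nil
  | cons x xs ih =>
    intro p hc hu
    rcases List.chain_cons.mp hc with ⟨hpx, hcx⟩
    rcases List.chain_cons.mp hu with ⟨hux, hux2⟩
    rw [ins]
    split_ifs with hcond
    · exact List.Chain.cons (lt_med hux) (List.Chain.cons (med_lt hux) (ih x hcx hux2))
    · exact List.Chain.cons hpx (ih x hcx hux2)

lemma ins_chain_uni (Q : ℕ) : ∀ l p, List.Chain Uni p l → List.Chain Uni p (ins Q p l) := by
  intro l
  induction l with
  | nil => intro p _; exact List.Chain.nil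
  | cons x xs ih =>
    intro p hu
    rcases List.chain_cons.mp hu with ⟨hux, hux2⟩
    rw [ins]
    split_ifs with hcond
    · exact List.Chain.cons (uni_left hux) (List.Chain.cons (uni_right hux) (ih x hux2))
    · exact List.Chain.cons hux (ih x hux2)

lemma SF_mono {Q Q' : ℕ} (h : Q ≤ Q') : SF Q ⊆ SF Q' := by
  intro z hz
  exact ⟨hz.1, hz.2.1, le_trans hz.2.2 h⟩

lemma one_mem_SF {Q : ℕ} (hQ : 3 ≤ Q) : (1 : ℚ) ∈ SF Q := by
  refine ⟨one_pos, le_refl _, ?_⟩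
  have : height 1 = 2 := by simp [height, modInv]
  omega

lemma le_of_mem_chain {x z : ℚ} {xs : List ℚ} (hc : List.Chain (· < ·) x xs)
    (hz : z ∈ x :: xs) : x ≤ z := by
  replace hc : List.Pairwise (· < ·) (x :: xs) := List.isChain_iff_pairwise.mp hc
  rcases List.mem_cons.mp hz with h | h
  · exact le_of_eq h.symm
  · exact (List.rel_of_pairwise_cons hc h).le

lemma ins_sub_SF (Q : ℕ) : ∀ l p, List.Chain (· < ·) p l → List.Chain Uni p l → 0 ≤ p →
    (∀ z ∈ l, z ∈ SF Q) → (∀ z ∈ l, z ≤ 1) →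
    ∀ z ∈ ins (Q + 1) p l, z ∈ SF (Q + 1) := by
  intro l
  induction l with
  | nil => intro p _ _ _ _ _ z hz; rw [ins] at hz; exact absurd hz List.not_mem_nil
  | cons x xs ih =>
    intro p hc hu hp hSF hle z hz
    rcases List.chain_cons.mp hc with ⟨hpx, hcx⟩
    rcases List.chain_cons.mp hu with ⟨hux, hux2⟩
    have hx1 : x ≤ 1 := hle x List.mem_cons_self
    have hxSF : x ∈ SF Q := hSF x List.mem_cons_self
    have htail : ∀ z ∈ ins (Q+1) x xs, z ∈ SF (Q+1) :=
      ih x hcx hux2 (le_of_lt (lt_of_le_of_lt hp hpx))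
        (fun w hw => hSF w (List.mem_cons_of_mem x hw))
        (fun w hw => hle w (List.mem_cons_of_mem x hw))
    rw [ins] at hz
    split_ifs at hz with hcond
    · rcases List.mem_cons.mp hz with h | h
      · subst h
        exact ⟨lt_of_le_of_lt hp (lt_med hux), le_of_lt (lt_of_lt_of_le (med_lt hux) hx1), hcond⟩
      · rcases List.mem_cons.mp h with h' | h'
        · subst h'; exact SF_mono (Nat.le_succ Q) hxSF
        · exact htail z h'
    · rcases List.mem_cons.mp hz with h | h
      · subst h; exact SF_mono (Nat.le_succ Q) hxSF
      · exact htail z h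

lemma ins_complete (Q : ℕ) (hQ : 3 ≤ Q) : ∀ l p, List.Chain (· < ·) p l →
    List.Chain Uni p l → 0 ≤ p → (∀ z ∈ l, z ≤ 1) →
    (∀ z, z ∈ SF Q → p < z → z ≤ 1 → z ∈ l) →
    ∀ y, y ∈ SF (Q + 1) → p < y → y ∈ ins (Q + 1) p l := by
  intro l
  induction l with
  | nil =>
    intro p _ _ _ _ H y hy hpy
    exfalso
    have h1 : (1 : ℚ) ∈ SF Q := one_mem_SF hQ
    have hp1 : p < 1 := lt_of_lt_of_le hpy hy.2.1
    exact absurd (H 1 h1 hp1 le_rfl) List.not_mem_nil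
  | cons x xs ih =>
    intro p hc hu hp hle H y hy hpy
    rcases List.chain_cons.mp hc with ⟨hpx, hcx⟩
    rcases List.chain_cons.mp hu with ⟨hux, hux2⟩
    have hx1 : x ≤ 1 := hle x List.mem_cons_self
    rcases lt_trichotomy y x with hyx | hyx | hyx
    · -- the mediant case
      have hynotQ : ¬ (height y ≤ Q) := by
        intro hhy
        have : y ∈ x :: xs := H y ⟨hy.1, hy.2.1, hhy⟩ hpy hy.2.1
        exact absurd (le_of_mem_chain hcx this) (not_le.mpr hyx)
      have hhy : height y = Q + 1 := by
        have := hy.2.2; omega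
      have hD := heightD (y.den) p x y (by have := p.pos; omega) hux hp hpy hyx
      by_cases hym : y = med p x
      · rw [ins, if_pos (by rw [← hym]; omega)]
        rw [hym]; exact List.mem_cons_self
      · exfalso
        have hmlt : height (med p x) < Q + 1 := by
          have := hD.2 hym; omega
        have hm0 : (0:ℚ) < med p x := lt_of_le_of_lt hp (lt_med hux)
        have hm1 : med p x ≤ 1 := le_of_lt (lt_of_lt_of_le (med_lt hux) hx1)
        have hmSF : med p x ∈ SF Q := ⟨hm0, hm1, by omega⟩
        have : med p x ∈ x :: xs := H (med p x) hmSF (lt_med hux) hm1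
        exact absurd (le_of_mem_chain hcx this) (not_le.mpr (med_lt hux))
    · -- y = x
      rw [ins]
      split_ifs with hcond
      · subst hyx; exact List.mem_cons_of_mem _ (List.mem_cons_self)
      · subst hyx; exact List.mem_cons_self
    · -- recurse
      have H' : ∀ z, z ∈ SF Q → x < z → z ≤ 1 → z ∈ xs := by
        intro z hz hxz hz1
        have : z ∈ x :: xs := H z hz (lt_trans hpx hxz) hz1
        rcases List.mem_cons.mp this with h | h
        · exact absurd h.symm (ne_of_lt hxz)
        · exact h
      have htail : y ∈ ins (Q+1) x xs :=
        ih x hcx hux2 (le_of_lt (lt_of_le_of_lt hp hpx))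
          (fun w hw => hle w (List.mem_cons_of_mem x hw)) H' y hy hyx
      rw [ins]
      split_ifs with hcond
      · exact List.mem_cons_of_mem _ (List.mem_cons_of_mem _ htail)
      · exact List.mem_cons_of_mem _ htail

lemma ins_pairSum (Q : ℕ) : ∀ l p, List.Chain Uni p l →
    pairSum p (ins Q p l) = pairSum p l + 3 * (((ins Q p l).length : ℚ) - (l.length : ℚ)) := by
  intro l
  induction l with
  | nil => intro p _; rw [ins]; simp [pairSum]
  | cons x xs ih =>
    intro p hu
    rcases List.chain_cons.mp hu with ⟨hux, hux2⟩
    have hpd : ((p.den : ℚ)) ≠ 0 := by exact_mod_cast p.pos.ne'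
    have hxd : ((x.den : ℚ)) ≠ 0 := by exact_mod_cast x.pos.ne'
    have hmden : ((med p x).den : ℚ) = (p.den : ℚ) + (x.den : ℚ) := by
      have := med_den' hux; exact_mod_cast this
    have IH := ih x hux2
    rw [ins]
    split_ifs with hcond
    · show pairSum p (med p x :: x :: ins Q x xs) = _
      rw [pairSum, pairSum, IH]
      rw [pairSum]
      rw [hmden]
      have hmd0 : (p.den : ℚ) + (x.den : ℚ) ≠ 0 := by positivity
      have key : (p.den : ℚ) / ((p.den : ℚ) + (x.den : ℚ)) + ((p.den : ℚ) + (x.den : ℚ)) / (p.den : ℚ)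
          + (((p.den : ℚ) + (x.den : ℚ)) / (x.den : ℚ) + (x.den : ℚ) / ((p.den : ℚ) + (x.den : ℚ)))
          = (p.den : ℚ) / (x.den : ℚ) + (x.den : ℚ) / (p.den : ℚ) + 3 := by
        field_simp
        ring
      simp only [List.length_cons]
      push_cast
      linarith [key]
    · show pairSum p (x :: ins Q x xs) = _
      rw [pairSum, pairSum, IH]
      simp only [List.length_cons]
      push_cast
      ring


lemma mem_SF_three {z : ℚ} (hz : z ∈ SF 3) : z = 1 := by
  obtain ⟨h0, h1, hh⟩ := hz
  have hnum : 0 < z.num := Rat.num_pos.mpr h0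
  have hdpos := z.pos
  by_cases hd : z.den = 1
  · -- integer in (0,1]
    have hle : z.num ≤ z.den := by
      have := (Rat.le_iff _ _).mp h1
      simpa using this
    have hz1 : z.num = 1 := by omega
    have := Rat.num_div_den z
    rw [hz1, hd] at this
    simpa using this.symm
  · exfalso
    -- den ≥ 2 forces height ≥ 4
    have hd2 : 2 ≤ z.den := by omega
    have hnt : 1 ≤ z.num.toNat := by omega
    have hmi : 1 ≤ modInv z.num.toNat z.den := by
      unfold modInv
      rw [if_neg (by omega)]
      haveI : NeZero z.den := ⟨by omega⟩
      haveI : Fact (1 < z.den) := ⟨by omega⟩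
      have hcop : Nat.Coprime z.num.toNat z.den := by
        have := z.reduced
        have : z.num.natAbs.Coprime z.den := this
        have he : z.num.toNat = z.num.natAbs := by omega
        rwa [he]
      have hunit : IsUnit ((z.num.toNat : ZMod z.den)) := by
        exact (ZMod.unitOfCoprime _ hcop).isUnit
      have hmul : ((z.num.toNat : ZMod z.den))⁻¹ * (z.num.toNat : ZMod z.den) = 1 :=
        ZMod.inv_mul_of_unit _ hunit
      have hne : ((z.num.toNat : ZMod z.den))⁻¹ ≠ 0 := by
        intro h0'
        rw [h0', zero_mul] at hmul
        exact zero_ne_one hmul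
      have : ((z.num.toNat : ZMod z.den))⁻¹.val ≠ 0 := by
        intro hv
        exact hne ((ZMod.val_eq_zero _).mp hv)
      omega
    unfold height at hh
    omega

lemma SF_three : ∀ z : ℚ, z ∈ [(1:ℚ)] ↔ z ∈ SF 3 := by
  intro z
  constructor
  · intro hz
    have : z = 1 := by simpa using hz
    subst this
    exact one_mem_SF le_rfl
  · intro hz
    simp [mem_SF_three hz]

lemma master : ∀ Q : ℕ, 3 ≤ Q → ∃ l : List ℚ,
    List.Chain (· < ·) 0 l ∧ List.Chain Uni 0 l ∧ (∀ z, z ∈ l ↔ z ∈ SF Q) ∧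
    pairSum 0 l = 3 * (l.length : ℚ) - 1 := by
  intro Q hQ
  induction Q, hQ using Nat.le_induction with
  | base =>
    refine ⟨[(1:ℚ)], ?_, ?_, SF_three, ?_⟩
    · exact List.Chain.cons one_pos List.Chain.nil
    · refine List.Chain.cons ?_ List.Chain.nil
      unfold Uni; norm_num
    · simp [pairSum]
      norm_num
  | succ Q hQ3 ih =>
    obtain ⟨l, hchain, huni, hmem, hsum⟩ := ih
    refine ⟨ins (Q+1) 0 l, ins_chain_lt _ l 0 hchain huni, ins_chain_uni _ l 0 huni, ?_, ?_⟩
    · intro z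
      constructor
      · intro hz
        exact ins_sub_SF Q l 0 hchain huni le_rfl
          (fun w hw => (hmem w).mp hw) (fun w hw => ((hmem w).mp hw).2.1) z hz
      · intro hz
        exact ins_complete Q hQ3 l 0 hchain huni le_rfl
          (fun w hw => ((hmem w).mp hw).2.1)
          (fun w hw hw0 hw1 => (hmem w).mpr hw) z hz hz.1
    · rw [ins_pairSum (Q+1) l 0 huni, hsum]
      ring


lemma pairSum_eq_sum : ∀ (l : List ℚ) (p : ℚ) (d : ℕ → ℚ), d 0 = (p.den : ℚ) →
    (∀ i (hi : i < l.length), d (i+1) = ((l.get ⟨i, hi⟩).den : ℚ)) →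
    pairSum p l = ∑ i ∈ Finset.range l.length, (d i / d (i+1) + d (i+1) / d i) := by
  intro l
  induction l with
  | nil => intro p d _ _; simp [pairSum]
  | cons x xs ih =>
    intro p d h0 hstep
    have h1 : d 1 = (x.den : ℚ) := hstep 0 (by simp)
    have IH := ih x (fun i => d (i+1)) h1 (by
      intro i hi
      have := hstep (i+1) (by simpa using Nat.succ_lt_succ hi)
      simpa using this)
    rw [pairSum, IH]
    have hlen : (x :: xs).length = xs.length + 1 := rfl
    rw [hlen, Finset.sum_range_succ' (fun i => d i / d (i+1) + d (i+1) / d i) xs.length]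
    rw [h0, h1]
    ring

end SFP

/-- Proposition 3: For `Q ≥ 3`, if `γ₁ < ⋯ < γ_S` enumerates
`𝔖𝔉_Q` (via a strictly monotone `f : Fin S → ℚ` with range `𝔖𝔉_Q`), and `qe`
records the denominators with the conventions `qe 0 = 1` (for `0/1`) and
`qe (S+1) = qe 1`, then `∑_{i=1}^{S} (q_{i−1} + q_{i+1})/q_i = 3S − 1`. -/
theorem index_sum_identity (Q S : ℕ) (hQ : 3 ≤ Q) (hS : 0 < S)
    (f : Fin S → ℚ) (hmono : StrictMono f) (hrange : Set.range f = SF Q)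
    (qe : ℕ → ℚ) (hq0 : qe 0 = 1)
    (hq : ∀ i : Fin S, qe (i.1 + 1) = ((f i).den : ℚ))
    (hqS : qe (S + 1) = qe 1) :
    ∑ i ∈ Finset.Icc 1 S, (qe (i - 1) + qe (i + 1)) / qe i = 3 * S - 1 := by
  classical
  obtain ⟨l, hchain, huni, hmem, hsum⟩ := SFP.master Q hQ
  have hpw : List.Pairwise (· < ·) ((0:ℚ) :: l) := List.isChain_iff_pairwise.mp hchain
  have hsorted_l : List.Pairwise (· < ·) l := (List.pairwise_cons.mp hpw).2
  have hsorted_f : List.Pairwise (· < ·) (List.ofFn f) :=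
    List.pairwise_ofFn.mpr (fun i j hij => hmono hij)
  have hnd1 : l.Nodup := hsorted_l.imp ne_of_lt
  have hnd2 : (List.ofFn f).Nodup := hsorted_f.imp ne_of_lt
  have hmemiff : ∀ z, z ∈ List.ofFn f ↔ z ∈ l := by
    intro z
    rw [List.mem_ofFn', hrange]
    exact (hmem z).symm
  have hperm : (List.ofFn f).Perm l := by
    apply List.perm_of_nodup_nodup_toFinset_eq hnd2 hnd1
    ext z
    simp only [List.mem_toFinset]
    exact hmemiff z
  haveI : IsAntisymm ℚ (· < ·) := ⟨fun a b h1 h2 => absurd h2 (asymm h1)⟩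
  have heq : List.ofFn f = l := List.Perm.eq_of_pairwise (fun a b _ _ h1 h2 => absurd h2 (asymm h1)) hsorted_f hsorted_l hperm
  have hlen : l.length = S := by rw [← heq, List.length_ofFn]
  -- the last denominator is 1
  have hfmax : f ⟨S-1, by omega⟩ = 1 := by
    have h1r : (1:ℚ) ∈ Set.range f := by rw [hrange]; exact SFP.one_mem_SF hQ
    obtain ⟨j, hj⟩ := h1r
    have hmemf : f ⟨S-1, by omega⟩ ∈ SF Q := by
      rw [← hrange]; exact ⟨_, rfl⟩
    have hle1 : f ⟨S-1, by omega⟩ ≤ 1 := hmemf.2.1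
    have hge1 : (1:ℚ) ≤ f ⟨S-1, by omega⟩ := by
      rw [← hj]
      apply hmono.monotone
      have := j.2
      exact Fin.mk_le_mk.mpr (by omega) |>.trans_eq rfl
    exact le_antisymm hle1 hge1
  have hqeS : qe S = 1 := by
    have h := hq ⟨S-1, by omega⟩
    rw [hfmax] at h
    have hS1 : S - 1 + 1 = S := by omega
    rw [hS1] at h
    rw [h]
    norm_num
  -- pairSum equals the symmetric range sum
  have hP : SFP.pairSum 0 l = ∑ i ∈ Finset.range S, (qe i / qe (i+1) + qe (i+1) / qe i) := by
    rw [← heq]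
    have := SFP.pairSum_eq_sum (List.ofFn f) 0 qe (by rw [hq0]; norm_num) ?_
    · rw [this, List.length_ofFn]
    · intro i hi
      have hi' : i < S := by simpa using hi
      have hg : (List.ofFn f).get ⟨i, hi⟩ = f ⟨i, hi'⟩ := by
        rw [List.get_ofFn]
        congr 1
      rw [hg]
      exact hq ⟨i, hi'⟩
  -- transform the goal sum
  have key : ∑ i ∈ Finset.Icc 1 S, (qe (i - 1) + qe (i + 1)) / qe i
      = ∑ i ∈ Finset.range S, (qe i / qe (i+1) + qe (i+1) / qe i) := by
    have hsplit : ∑ i ∈ Finset.Icc 1 S, (qe (i - 1) + qe (i + 1)) / qe i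
        = ∑ i ∈ Finset.Icc 1 S, (qe (i-1)/qe i + qe (i+1)/qe i) := by
      apply Finset.sum_congr rfl
      intro i _
      exact add_div _ _ _
    rw [hsplit, Finset.sum_add_distrib]
    have hIcc : Finset.Icc 1 S = Finset.Ico 1 (S+1) := (Finset.Ico_add_one_right_eq_Icc 1 S).symm
    rw [hIcc, Finset.sum_Ico_eq_sum_range, Finset.sum_Ico_eq_sum_range]
    have hS' : S + 1 - 1 = S := by omega
    rw [hS']
    have hA : ∑ i ∈ Finset.range S, qe (1 + i - 1) / qe (1 + i)
        = ∑ i ∈ Finset.range S, qe i / qe (i+1) := by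
      apply Finset.sum_congr rfl
      intro i _
      have e1 : 1 + i - 1 = i := by omega
      have e2 : 1 + i = i + 1 := by omega
      rw [e1, e2]
    have hB : ∑ i ∈ Finset.range S, qe (1 + i + 1) / qe (1 + i)
        = ∑ i ∈ Finset.range S, qe (i+1+1) / qe (i+1) := by
      apply Finset.sum_congr rfl
      intro i _
      have e2 : 1 + i = i + 1 := by omega
      rw [e2]
    rw [hA, hB]
    have hshift : ∑ i ∈ Finset.range S, qe (i+1+1) / qe (i+1)
        = ∑ i ∈ Finset.range S, qe (i+1) / qe i := by
      have h1 := Finset.sum_range_succ' (fun i => qe (i+1) / qe i) S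
      have h2 := Finset.sum_range_succ (fun i => qe (i+1) / qe i) S
      have hG0 : qe (0+1) / qe 0 = qe 1 := by rw [hq0]; simp
      have hGS : qe (S+1) / qe S = qe 1 := by rw [hqS, hqeS]; simp
      rw [hG0] at h1
      rw [hGS] at h2
      linarith
    rw [hshift]
    rw [← Finset.sum_add_distrib]
  rw [key, ← hP, hsum, hlen]
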